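/- Let Y be a finite type, π_ref a strictly positive probability mass function on Y, r : Y → ℝ injective, N ≥ 2, and π : ℝ → Y → ℝ a family of probability mass functions on Y such that for each y the map θ ↦ π(θ)(y) is differentiable and strictly positive, with Σ_y π(θ)(y) = 1 for all θ. Define r_BOND(y) = log p_≤(y) + (1/(N−1)) · log Σ_{i=1}^{N} (p_<(y)/p_≤(y))^(i−1) and β_BOND = 1/(N−1). Then (d/dθ) KL(π(θ) ‖ π_BoN) = −(N−1) · Σ_{y ∈ Y} π(θ)(y) · ((d/dθ) log π(θ)(y)) · (r_BOND(y) − β_BOND · (log π(θ)(y) − log π_ref(y))); i.e., the backward-KL gradient coincides (up to the factor N−1) with the policy gradient of the KL-regularized RLHF objective with reward r_BOND and regularization strength β_BOND. -/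

import Mathlib

open scoped Classical

/-- `pLt pref r y` is the probability under `pref` that a sample has strictly smaller reward. -/
noncomputable def pLt {Y : Type*} [Fintype Y] (pref : Y → ℝ) (r : Y → ℝ) (y : Y) : ℝ :=
  ∑ y' ∈ Finset.univ.filter (fun y' => r y' < r y), pref y'

/-- `pLe pref r y` is the probability under `pref` that a sample has reward not larger. -/
noncomputable def pLe {Y : Type*} [Fintype Y] (pref : Y → ℝ) (r : Y → ℝ) (y : Y) : ℝ :=
  ∑ y' ∈ Finset.univ.filter (fun y' => r y' ≤ r y), pref y'

/-- The Best-of-N selection of the tuple `t` is `y`: the smallest index `i` among the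
argmax indices of `r ∘ t` satisfies `t i = y`. -/
def IsBoNSelection {Y : Type*} (r : Y → ℝ) {N : ℕ} (t : Fin N → Y) (y : Y) : Prop :=
  ∃ i : Fin N, (∀ j, r (t j) ≤ r (t i)) ∧
    (∀ i' : Fin N, (∀ j, r (t j) ≤ r (t i')) → i ≤ i') ∧ t i = y

/-- The Best-of-N distribution: probability that sampling `N` i.i.d. points from `pref`
and selecting the best one yields `y`. -/
noncomputable def piBoN {Y : Type*} [Fintype Y] (pref : Y → ℝ) (r : Y → ℝ) (N : ℕ) (y : Y) : ℝ :=
  ∑ t : Fin N → Y, if IsBoNSelection r t y then ∏ j, pref (t j) else 0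

section Aux

variable {Y : Type*} [Fintype Y]

lemma isBoN_iff {r : Y → ℝ} (hr : Function.Injective r) {N : ℕ}
    (t : Fin N → Y) (y : Y) :
    IsBoNSelection r t y ↔ (∀ j, r (t j) ≤ r y) ∧ ¬ (∀ j, r (t j) < r y) := by
  constructor
  · rintro ⟨i, hmax, hmin, rfl⟩
    exact ⟨hmax, fun h => lt_irrefl _ (h i)⟩
  · rintro ⟨hle, hnotlt⟩
    push_neg at hnotlt
    obtain ⟨j, hj⟩ := hnotlt
    have hj' : t j = y := hr (le_antisymm (hle j) hj)
    have hne : (Finset.univ.filter (fun i => t i = y)).Nonempty := ⟨j, by simp [hj']⟩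
    set i := (Finset.univ.filter (fun i => t i = y)).min' hne with hi
    have hiy : t i = y := by
      have := Finset.min'_mem _ hne
      simpa using this
    refine ⟨i, ?_, ?_, hiy⟩
    · intro k; rw [hiy]; exact hle k
    · intro i' hi'
      have hy' : t i' = y := hr (le_antisymm (hle i') (by simpa [hiy] using hi' i))
      exact Finset.min'_le _ _ (by simp [hy'])

lemma sum_tuple_all_mem (pref : Y → ℝ) {N : ℕ} (s : Finset Y) :
    (∑ t : Fin N → Y, if (∀ j, t j ∈ s) then ∏ j, pref (t j) else 0)
      = (∑ y' ∈ s, pref y') ^ N := by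
  rw [← Finset.sum_filter]
  have h : Finset.univ.filter (fun t : Fin N → Y => ∀ j, t j ∈ s)
      = Fintype.piFinset (fun _ : Fin N => s) := by
    ext t; simp [Fintype.mem_piFinset]
  rw [h, ← Finset.prod_univ_sum]
  simp

lemma piBoN_eq (pref : Y → ℝ) {r : Y → ℝ} (hr : Function.Injective r)
    (N : ℕ) (y : Y) :
    piBoN pref r N y = pLe pref r y ^ N - pLt pref r y ^ N := by
  unfold piBoN
  have h1 : ∀ t : Fin N → Y,
      (if IsBoNSelection r t y then ∏ j, pref (t j) else 0)
        = (if (∀ j, t j ∈ Finset.univ.filter (fun y' => r y' ≤ r y)) then ∏ j, pref (t j) else 0)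
          - (if (∀ j, t j ∈ Finset.univ.filter (fun y' => r y' < r y)) then ∏ j, pref (t j) else 0) := by
    intro t
    rw [isBoN_iff hr]
    by_cases hA : ∀ j, r (t j) ≤ r y
    · by_cases hB : ∀ j, r (t j) < r y
      · simp [hA, hB]
      · simp [hA, hB]
    · have hB : ¬ ∀ j, r (t j) < r y := fun h => hA (fun j => (h j).le)
      simp [hA, hB]
  rw [Finset.sum_congr rfl (fun t _ => h1 t), Finset.sum_sub_distrib,
    sum_tuple_all_mem, sum_tuple_all_mem]
  rfl

lemma pLe_eq (pref : Y → ℝ) {r : Y → ℝ} (hr : Function.Injective r) (y : Y) :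
    pLe pref r y = pref y + pLt pref r y := by
  unfold pLe pLt
  have h : Finset.univ.filter (fun y' => r y' ≤ r y)
      = insert y (Finset.univ.filter (fun y' => r y' < r y)) := by
    ext y'
    simp only [Finset.mem_filter, Finset.mem_insert, Finset.mem_univ, true_and]
    constructor
    · intro h
      rcases eq_or_lt_of_le h with h | h
      · exact Or.inl (hr h)
      · exact Or.inr h
    · rintro (rfl | h); exacts [le_rfl, h.le]
  rw [h, Finset.sum_insert (by simp)]

lemma pLt_nonneg (pref : Y → ℝ) (hpos : ∀ y, 0 < pref y) (r : Y → ℝ) (y : Y) :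
    0 ≤ pLt pref r y :=
  Finset.sum_nonneg fun y' _ => (hpos y').le

lemma pLe_pos (pref : Y → ℝ) (hpos : ∀ y, 0 < pref y) {r : Y → ℝ}
    (hr : Function.Injective r) (y : Y) : 0 < pLe pref r y := by
  rw [pLe_eq pref hr]
  have := pLt_nonneg pref hpos r y
  have := hpos y
  linarith

lemma log_piBoN (pref : Y → ℝ) (hpos : ∀ y, 0 < pref y) {r : Y → ℝ}
    (hr : Function.Injective r) {N : ℕ} (hN : 2 ≤ N) (y : Y) :
    Real.log (piBoN pref r N y)
      = Real.log (pref y) + ((N : ℝ) - 1) * Real.log (pLe pref r y)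
        + Real.log (∑ i ∈ Finset.range N, (pLt pref r y / pLe pref r y) ^ i) := by
  set a := pLt pref r y with ha
  set b := pLe pref r y with hb
  have hba : b = pref y + a := pLe_eq pref hr y
  have ha0 : 0 ≤ a := pLt_nonneg pref hpos r y
  have hb0 : 0 < b := pLe_pos pref hpos hr y
  have hbne : b ≠ 0 := hb0.ne'
  set T := ∑ i ∈ Finset.range N, (a / b) ^ i with hT
  have hTpos : 0 < T := by
    apply Finset.sum_pos' (fun i _ => pow_nonneg (div_nonneg ha0 hb0.le) i)
    exact ⟨0, Finset.mem_range.mpr (by omega), by simp⟩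
  have hterm : ∀ i ∈ Finset.range N, b ^ i * a ^ (N - 1 - i)
      = b ^ (N - 1) * (a / b) ^ (N - 1 - i) := by
    intro i hi
    have hi' : i < N := Finset.mem_range.mp hi
    have h1 : b ^ (N - 1) = b ^ i * b ^ (N - 1 - i) := by
      rw [← pow_add]; congr 1; omega
    rw [div_pow, h1]
    field_simp
  have hgeom : (∑ i ∈ Finset.range N, b ^ i * a ^ (N - 1 - i)) * (b - a) = b ^ N - a ^ N :=
    geom_sum₂_mul b a N
  have hsum : (∑ i ∈ Finset.range N, b ^ i * a ^ (N - 1 - i)) = b ^ (N - 1) * T := by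
    rw [Finset.sum_congr rfl hterm, ← Finset.mul_sum]
    congr 1
    exact Finset.sum_range_reflect (fun i => (a / b) ^ i) N
  have hBoN : piBoN pref r N y = pref y * (b ^ (N - 1) * T) := by
    rw [piBoN_eq pref hr]
    rw [← hgeom, hsum, hba]
    ring
  rw [hBoN]
  rw [Real.log_mul (hpos y).ne' (by positivity), Real.log_mul (by positivity) hTpos.ne',
    Real.log_pow]
  have : ((N - 1 : ℕ) : ℝ) = (N : ℝ) - 1 := by
    rw [Nat.cast_sub (by omega)]; norm_num
  rw [this]
  ring

end Aux

/-- The gradient of the backward KL divergence from the Best-of-N distribution coincides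
(up to the factor `N−1`) with the policy gradient of the KL-regularized RLHF objective with
the BOND reward `r_BOND(y) = log p_≤(y) + (1/(N−1)) log Σ_{i=1}^N (p_<(y)/p_≤(y))^(i−1)`
and regularization strength `β_BOND = 1/(N−1)`:
`(d/dθ) KL(π(θ) ‖ π_BoN) =
  −(N−1) Σ_y π(θ)(y) ((d/dθ) log π(θ)(y)) (r_BOND(y) − β_BOND (log π(θ)(y) − log π_ref(y)))`. -/
theorem backward_kl_is_policy_gradient {Y : Type*} [Fintype Y]
    (pref : Y → ℝ) (hpos : ∀ y, 0 < pref y) (hsum : ∑ y, pref y = 1)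
    (r : Y → ℝ) (hr : Function.Injective r)
    (N : ℕ) (hN : 2 ≤ N)
    (π : ℝ → Y → ℝ)
    (hπpos : ∀ θ y, 0 < π θ y)
    (hπdiff : ∀ y, Differentiable ℝ (fun θ => π θ y))
    (hπsum : ∀ θ, ∑ y, π θ y = 1)
    (rBOND : Y → ℝ)
    (hrBOND : ∀ y, rBOND y = Real.log (pLe pref r y) +
      (1 / ((N : ℝ) - 1)) *
        Real.log (∑ i ∈ Finset.range N, (pLt pref r y / pLe pref r y) ^ i))
    (βBOND : ℝ) (hβ : βBOND = 1 / ((N : ℝ) - 1)) :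
    ∀ θ : ℝ,
      HasDerivAt (fun θ' => ∑ y, π θ' y * (Real.log (π θ' y) - Real.log (piBoN pref r N y)))
        (-((N : ℝ) - 1) *
          ∑ y, π θ y * deriv (fun θ' => Real.log (π θ' y)) θ *
            (rBOND y - βBOND * (Real.log (π θ y) - Real.log (pref y)))) θ := by
  intro θ
  have hN2 : (2 : ℝ) ≤ (N : ℝ) := by exact_mod_cast hN
  have hNR : (N : ℝ) - 1 ≠ 0 := by linarith
  have hder : ∀ y, HasDerivAt (fun θ' => π θ' y) (deriv (fun θ' => π θ' y) θ) θ :=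
    fun y => ((hπdiff y) θ).hasDerivAt
  set d : Y → ℝ := fun y => deriv (fun θ' => π θ' y) θ with hd
  have hterm : ∀ y, HasDerivAt
      (fun θ' => π θ' y * (Real.log (π θ' y) - Real.log (piBoN pref r N y)))
      (d y * (Real.log (π θ y) - Real.log (piBoN pref r N y)) + d y) θ := by
    intro y
    have hne : π θ y ≠ 0 := (hπpos θ y).ne'
    have h2 : HasDerivAt (fun θ' => Real.log (π θ' y)) (d y / π θ y) θ := (hder y).log hne
    have h3 := (hder y).fun_mul (h2.sub_const (Real.log (piBoN pref r N y)))
    refine h3.congr_deriv ?_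
    rw [mul_div_assoc', mul_div_cancel_left₀ _ hne]
  have hsumder : HasDerivAt
      (fun θ' => ∑ y, π θ' y * (Real.log (π θ' y) - Real.log (piBoN pref r N y)))
      (∑ y, (d y * (Real.log (π θ y) - Real.log (piBoN pref r N y)) + d y)) θ :=
    HasDerivAt.fun_sum (fun y _ => hterm y)
  have hzero : (∑ y, d y) = 0 := by
    have h1 : HasDerivAt (fun θ' => ∑ y, π θ' y) (∑ y, d y) θ :=
      HasDerivAt.fun_sum (fun y _ => hder y)
    have h2 : (fun θ' => ∑ y, π θ' y) = fun _ => (1 : ℝ) := funext hπsum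
    rw [h2] at h1
    exact h1.unique (hasDerivAt_const θ 1)
  have hval : -((N : ℝ) - 1) *
      ∑ y, π θ y * deriv (fun θ' => Real.log (π θ' y)) θ *
        (rBOND y - βBOND * (Real.log (π θ y) - Real.log (pref y)))
      = ∑ y, (d y * (Real.log (π θ y) - Real.log (piBoN pref r N y)) + d y) := by
    rw [Finset.sum_add_distrib, hzero, add_zero, Finset.mul_sum]
    apply Finset.sum_congr rfl
    intro y _
    have hne : π θ y ≠ 0 := (hπpos θ y).ne'
    have hdl : deriv (fun θ' => Real.log (π θ' y)) θ = d y / π θ y :=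
      ((hder y).log hne).deriv
    have hlog : Real.log (piBoN pref r N y)
        = Real.log (pref y) + ((N : ℝ) - 1) * Real.log (pLe pref r y)
          + Real.log (∑ i ∈ Finset.range N, (pLt pref r y / pLe pref r y) ^ i) :=
      log_piBoN pref hpos hr hN y
    rw [hdl, hrBOND y, hβ, hlog]
    field_simp
    ring
  rw [← hval] at hsumder
  exact hsumder
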